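/- Let b₁, b₂ be positive integers and k an integer with gcd(k, b₁b₂) = 1. Then Ŝ(b₁,b₂,k,0) = φ(b₁) if b₁ = b₂, and Ŝ(b₁,b₂,k,0) = 0 if b₁ ≠ b₂, where φ is Euler's totient function. -/

import Mathlib

/-- `e_c(x) = e^{2πix/c}`. -/
noncomputable def eadd (c : ℕ) (x : ℤ) : ℂ := Complex.exp (2 * Real.pi * Complex.I * x / c)

/-- The Kloosterman sum `S(m,n;c) = Σ_{x mod c, (x,c)=1} e_c(m x + n x̄)`. -/
noncomputable def Kl (m n : ℤ) (c : ℕ) : ℂ :=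
  ∑ t ∈ Finset.filter (fun t => Nat.Coprime t c) (Finset.range c),
    eadd c (m * t + n * ((((t : ZMod c)⁻¹).val : ℕ) : ℤ))

lemma eadd_add (c : ℕ) (x y : ℤ) : eadd c (x + y) = eadd c x * eadd c y := by
  rw [eadd, eadd, eadd, ← Complex.exp_add]
  congr 1
  push_cast
  ring

lemma eadd_dvd (c : ℕ) (a : ℤ) (h : (c : ℤ) ∣ a) : eadd c a = 1 := by
  obtain ⟨m, rfl⟩ := h
  rcases Nat.eq_zero_or_pos c with rfl | hc
  · simp [eadd]
  · have hc0 : (c : ℂ) ≠ 0 := Nat.cast_ne_zero.mpr hc.ne'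
    rw [eadd, show 2 * (Real.pi : ℂ) * Complex.I * ((c : ℤ) * m : ℤ) / c
        = (m : ℂ) * (2 * Real.pi * Complex.I) by push_cast; field_simp]
    exact Complex.exp_int_mul_two_pi_mul_I m

lemma eadd_eq_one_iff (c : ℕ) (hc : 0 < c) (a : ℤ) : eadd c a = 1 ↔ (c : ℤ) ∣ a := by
  refine ⟨fun h => ?_, eadd_dvd c a⟩
  rw [eadd, Complex.exp_eq_one_iff] at h
  obtain ⟨n, hn⟩ := h
  have hc0 : (c : ℂ) ≠ 0 := Nat.cast_ne_zero.mpr hc.ne'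
  have h2 : (2 * (Real.pi : ℂ) * Complex.I) ≠ 0 := by
    simp [Real.pi_ne_zero, Complex.I_ne_zero]
  have : (a : ℂ) = n * c := by
    field_simp at hn
    have h3 : (2 * (Real.pi:ℂ) * Complex.I) * (a : ℂ)
        = (2 * (Real.pi:ℂ) * Complex.I) * ((n : ℂ) * c) := by linear_combination (2 * (Real.pi:ℂ) * Complex.I) * hn
    exact mul_left_cancel₀ h2 h3
  have ha : a = n * c := by exact_mod_cast this
  exact ⟨n, by linarith⟩

lemma eadd_nat_pow (c : ℕ) (x : ℕ) (a : ℤ) : eadd c ((x : ℤ) * a) = (eadd c a) ^ x := by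
  rw [eadd, eadd, ← Complex.exp_nat_mul]
  congr 1
  push_cast
  ring

lemma sum_eadd (c : ℕ) (hc : 0 < c) (a : ℤ) :
    ∑ x ∈ Finset.range c, eadd c ((x : ℤ) * a) = if (c : ℤ) ∣ a then (c : ℂ) else 0 := by
  split_ifs with h
  · calc ∑ x ∈ Finset.range c, eadd c ((x : ℤ) * a)
        = ∑ _x ∈ Finset.range c, (1 : ℂ) :=
          Finset.sum_congr rfl fun x _ => eadd_dvd c ((x:ℤ)*a) (Dvd.dvd.mul_left h _)
      _ = (c : ℂ) := by simp
  · have hζ : eadd c a ≠ 1 := fun h1 => h ((eadd_eq_one_iff c hc a).mp h1)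
    have hζc : (eadd c a) ^ c = 1 := by
      rw [← eadd_nat_pow]
      exact eadd_dvd c _ ⟨a, rfl⟩
    calc ∑ x ∈ Finset.range c, eadd c ((x : ℤ) * a)
        = ∑ x ∈ Finset.range c, (eadd c a) ^ x :=
          Finset.sum_congr rfl fun x _ => eadd_nat_pow c x a
      _ = ((eadd c a) ^ c - 1) / (eadd c a - 1) := geom_sum_eq hζ c
      _ = 0 := by rw [hζc]; simp

lemma eadd_scale (c d : ℕ) (hc : 0 < c) (hd : 0 < d) (y : ℤ) :
    eadd c y = eadd (c * d) (y * d) := by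
  rw [eadd, eadd]
  congr 1
  have hc0 : (c : ℂ) ≠ 0 := Nat.cast_ne_zero.mpr hc.ne'
  have hd0 : (d : ℂ) ≠ 0 := Nat.cast_ne_zero.mpr hd.ne'
  push_cast
  field_simp

lemma inv_add_inv_eq_zero_iff {n : ℕ} (a b : ZMod n) (ha : IsUnit a) (hb : IsUnit b) :
    a⁻¹ + b⁻¹ = 0 ↔ a + b = 0 := by
  constructor
  · intro h
    have h2 : (a⁻¹ + b⁻¹) * (a * b) = 0 := by rw [h, zero_mul]
    have h3 : (a⁻¹ * a) * b + (b⁻¹ * b) * a = 0 := by linear_combination h2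
    rw [ZMod.inv_mul_of_unit a ha, ZMod.inv_mul_of_unit b hb, one_mul, one_mul] at h3
    linear_combination h3
  · intro h
    have h2 : (a + b) * (a⁻¹ * b⁻¹) = 0 := by rw [h, zero_mul]
    have h3 : (a * a⁻¹) * b⁻¹ + (b * b⁻¹) * a⁻¹ = 0 := by linear_combination h2
    rw [ZMod.mul_inv_of_unit a ha, ZMod.mul_inv_of_unit b hb, one_mul, one_mul] at h3
    linear_combination h3

lemma coprime_inv_val {b : ℕ} {t : ℕ} (h : Nat.Coprime t b) :
    Nat.Coprime ((t : ZMod b)⁻¹).val b := by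
  have hu : IsUnit ((t : ZMod b)) := (ZMod.isUnit_iff_coprime t b).mpr h
  obtain ⟨u, hu⟩ := hu
  rw [← hu, ZMod.inv_coe_unit]
  exact ZMod.val_coe_unit_coprime u⁻¹

lemma key (b₁ b₂ : ℕ) (hb₁ : 0 < b₁) (hb₂ : 0 < b₂) (m₁ m₂ : ℤ) :
    ∑ x ∈ Finset.range (b₁ * b₂), Kl m₁ (x : ℤ) b₁ * Kl m₂ (x : ℤ) b₂
      = ∑ t₁ ∈ Finset.filter (fun t => Nat.Coprime t b₁) (Finset.range b₁),
          ∑ t₂ ∈ Finset.filter (fun t => Nat.Coprime t b₂) (Finset.range b₂),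
            eadd b₁ (m₁ * t₁) * eadd b₂ (m₂ * t₂) *
              (if (b₁ * b₂) ∣ (((t₁ : ZMod b₁)⁻¹).val * b₂ + ((t₂ : ZMod b₂)⁻¹).val * b₁)
                then ((b₁ * b₂ : ℕ) : ℂ) else 0) := by
  have hbb : 0 < b₁ * b₂ := Nat.mul_pos hb₁ hb₂
  calc ∑ x ∈ Finset.range (b₁ * b₂), Kl m₁ (x : ℤ) b₁ * Kl m₂ (x : ℤ) b₂
      = ∑ x ∈ Finset.range (b₁ * b₂),
          ∑ t₁ ∈ Finset.filter (fun t => Nat.Coprime t b₁) (Finset.range b₁),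
            ∑ t₂ ∈ Finset.filter (fun t => Nat.Coprime t b₂) (Finset.range b₂),
              eadd b₁ (m₁ * t₁ + (x : ℤ) * (((t₁ : ZMod b₁)⁻¹).val : ℤ)) *
                eadd b₂ (m₂ * t₂ + (x : ℤ) * (((t₂ : ZMod b₂)⁻¹).val : ℤ)) := by
        refine Finset.sum_congr rfl fun x _ => ?_
        rw [Kl, Kl, Finset.sum_mul_sum]
    _ = ∑ t₁ ∈ Finset.filter (fun t => Nat.Coprime t b₁) (Finset.range b₁),
          ∑ t₂ ∈ Finset.filter (fun t => Nat.Coprime t b₂) (Finset.range b₂),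
            ∑ x ∈ Finset.range (b₁ * b₂),
              eadd b₁ (m₁ * t₁ + (x : ℤ) * (((t₁ : ZMod b₁)⁻¹).val : ℤ)) *
                eadd b₂ (m₂ * t₂ + (x : ℤ) * (((t₂ : ZMod b₂)⁻¹).val : ℤ)) := by
        rw [Finset.sum_comm]
        exact Finset.sum_congr rfl fun t₁ _ => Finset.sum_comm
    _ = _ := by
        refine Finset.sum_congr rfl fun t₁ _ => Finset.sum_congr rfl fun t₂ _ => ?_
        set v₁ : ℕ := ((t₁ : ZMod b₁)⁻¹).val with hv₁
        set v₂ : ℕ := ((t₂ : ZMod b₂)⁻¹).val with hv₂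
        have hx : ∀ x : ℕ,
            eadd b₁ (m₁ * t₁ + (x : ℤ) * (v₁ : ℤ)) * eadd b₂ (m₂ * t₂ + (x : ℤ) * (v₂ : ℤ))
              = eadd b₁ (m₁ * t₁) * eadd b₂ (m₂ * t₂) *
                eadd (b₁ * b₂) ((x : ℤ) * ((v₁ * b₂ + v₂ * b₁ : ℕ) : ℤ)) := by
          intro x
          rw [eadd_add, eadd_add]
          have e1 : eadd b₁ ((x : ℤ) * (v₁ : ℤ)) = eadd (b₁ * b₂) ((x : ℤ) * (v₁ : ℤ) * b₂) :=
            eadd_scale b₁ b₂ hb₁ hb₂ _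
          have e2 : eadd b₂ ((x : ℤ) * (v₂ : ℤ)) = eadd (b₁ * b₂) ((x : ℤ) * (v₂ : ℤ) * b₁) := by
            rw [mul_comm b₁ b₂]; exact eadd_scale b₂ b₁ hb₂ hb₁ _
          have e3 : eadd (b₁ * b₂) ((x : ℤ) * (v₁ : ℤ) * b₂) *
              eadd (b₁ * b₂) ((x : ℤ) * (v₂ : ℤ) * b₁)
              = eadd (b₁ * b₂) ((x : ℤ) * ((v₁ * b₂ + v₂ * b₁ : ℕ) : ℤ)) := by
            rw [← eadd_add]; congr 1; push_cast; ring
          rw [e1, e2, ← e3]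
          ring
        rw [Finset.sum_congr rfl fun x _ => hx x, ← Finset.mul_sum,
          sum_eadd (b₁ * b₂) hbb _]
        norm_cast

lemma diag (b : ℕ) (hb : 0 < b) (m : ℤ) :
    ∑ t₁ ∈ Finset.filter (fun t => Nat.Coprime t b) (Finset.range b),
        ∑ t₂ ∈ Finset.filter (fun t => Nat.Coprime t b) (Finset.range b),
          eadd b (m * t₁) * eadd b (m * t₂) *
            (if (b * b) ∣ (((t₁ : ZMod b)⁻¹).val * b + ((t₂ : ZMod b)⁻¹).val * b)
              then ((b * b : ℕ) : ℂ) else 0)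
      = ((b * b : ℕ) : ℂ) * (Nat.totient b : ℂ) := by
  haveI : NeZero b := ⟨hb.ne'⟩
  have hinner : ∀ t₁ ∈ Finset.filter (fun t => Nat.Coprime t b) (Finset.range b),
      ∑ t₂ ∈ Finset.filter (fun t => Nat.Coprime t b) (Finset.range b),
        eadd b (m * t₁) * eadd b (m * t₂) *
          (if (b * b) ∣ (((t₁ : ZMod b)⁻¹).val * b + ((t₂ : ZMod b)⁻¹).val * b)
            then ((b * b : ℕ) : ℂ) else 0) = ((b * b : ℕ) : ℂ) := by
    intro t₁ ht₁
    obtain ⟨ht₁r, ht₁c⟩ := Finset.mem_filter.mp ht₁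
    have hu₁ : IsUnit ((t₁ : ℕ) : ZMod b) := (ZMod.isUnit_iff_coprime t₁ b).mpr ht₁c
    set s : ℕ := (-((t₁ : ℕ) : ZMod b)).val with hs
    have hsval : ((s : ℕ) : ZMod b) = -((t₁ : ℕ) : ZMod b) := ZMod.natCast_zmod_val _
    have hcond : ∀ t₂ : ℕ, Nat.Coprime t₂ b →
        ((b * b) ∣ (((t₁ : ZMod b)⁻¹).val * b + ((t₂ : ZMod b)⁻¹).val * b)
          ↔ ((t₁ : ZMod b) + (t₂ : ZMod b) = 0)) := by
      intro t₂ ht₂c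
      have hu₂ : IsUnit ((t₂ : ℕ) : ZMod b) := (ZMod.isUnit_iff_coprime t₂ b).mpr ht₂c
      rw [show ((t₁ : ZMod b)⁻¹).val * b + ((t₂ : ZMod b)⁻¹).val * b
          = (((t₁ : ZMod b)⁻¹).val + ((t₂ : ZMod b)⁻¹).val) * b by ring,
        Nat.mul_dvd_mul_iff_right hb, ← ZMod.natCast_eq_zero_iff,
        Nat.cast_add, ZMod.natCast_zmod_val, ZMod.natCast_zmod_val,
        inv_add_inv_eq_zero_iff _ _ hu₁ hu₂]
    have hmem : s ∈ Finset.filter (fun t => Nat.Coprime t b) (Finset.range b) := by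
      refine Finset.mem_filter.mpr ⟨Finset.mem_range.mpr (ZMod.val_lt _), ?_⟩
      obtain ⟨u, hu⟩ := hu₁.neg
      rw [hs, ← hu]
      exact ZMod.val_coe_unit_coprime u
    refine Finset.sum_eq_single_of_mem s hmem ?_ |>.trans ?_
    · intro t₂ ht₂ hne
      obtain ⟨ht₂r, ht₂c⟩ := Finset.mem_filter.mp ht₂
      rw [if_neg, mul_zero]
      intro hdvd
      have h0 : (t₁ : ZMod b) + (t₂ : ZMod b) = 0 := (hcond t₂ ht₂c).mp hdvd
      have : ((t₂ : ℕ) : ZMod b) = -((t₁ : ℕ) : ZMod b) := eq_neg_of_add_eq_zero_right h0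
      apply hne
      rw [← ZMod.val_cast_of_lt (Finset.mem_range.mp ht₂r), this, hs]
    · rw [if_pos ((hcond s (Finset.mem_filter.mp hmem).2).mpr (by rw [hsval]; ring)),
        ← eadd_add, eadd_dvd, one_mul]
      have hns : b ∣ t₁ + s := by
        rw [← ZMod.natCast_eq_zero_iff, Nat.cast_add, hsval]
        ring
      have : m * (t₁ : ℤ) + m * (s : ℤ) = m * (((t₁ + s : ℕ) : ℤ)) := by push_cast; ring
      rw [this]
      exact Dvd.dvd.mul_left (Int.natCast_dvd_natCast.mpr hns) m
  rw [Finset.sum_congr rfl hinner, Finset.sum_const, nsmul_eq_mul]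
  have hcard : (Finset.filter (fun t => Nat.Coprime t b) (Finset.range b)).card
      = Nat.totient b := by
    rw [Nat.totient]
    congr 1
    exact Finset.filter_congr fun x _ => by simp [Nat.coprime_comm]
  rw [hcard]
  ring

lemma eadd_zero (c : ℕ) : eadd c 0 = 1 := eadd_dvd c 0 (dvd_zero _)

/-- `Ŝ(b₁,b₂,k,n'') = (b₁b₂)⁻¹ Σ_{x mod b₁b₂} S(k̄₁,x;b₁) S(k̄₂,x;b₂) e_{b₁b₂}(x n'')`,
where `k̄ᵢ` is the inverse of `k` modulo `bᵢ`. -/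
noncomputable def Shat (b₁ b₂ : ℕ) (k n'' : ℤ) : ℂ :=
  (1 / ((b₁ : ℂ) * (b₂ : ℂ))) *
    ∑ x ∈ Finset.range (b₁ * b₂),
      Kl (((((k : ZMod b₁)⁻¹).val : ℕ) : ℤ)) (x : ℤ) b₁ *
        Kl (((((k : ZMod b₂)⁻¹).val : ℕ) : ℤ)) (x : ℤ) b₂ *
        eadd (b₁ * b₂) ((x : ℤ) * n'')

/-- The diagonal term (from Lemma `Diagonal`): for `(k, b₁b₂) = 1`,
`Ŝ(b₁,b₂,k,0) = φ(b₁)` if `b₁ = b₂`, and `Ŝ(b₁,b₂,k,0) = 0` otherwise. -/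
theorem Shat_zero_eval
    (b₁ b₂ : ℕ) (hb₁ : 0 < b₁) (hb₂ : 0 < b₂)
    (k : ℤ) (hk : Int.gcd k ((b₁ : ℤ) * (b₂ : ℤ)) = 1) :
    Shat b₁ b₂ k 0 = if b₁ = b₂ then (Nat.totient b₁ : ℂ) else 0 := by
  rw [Shat]
  simp only [mul_zero, eadd_zero, mul_one]
  rw [key b₁ b₂ hb₁ hb₂]
  split_ifs with h
  · subst h
    rw [diag b₁ hb₁]
    have hb0 : (b₁ : ℂ) ≠ 0 := Nat.cast_ne_zero.mpr hb₁.ne'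
    push_cast
    field_simp
  · rw [Finset.sum_eq_zero, mul_zero]
    intro t₁ ht₁
    apply Finset.sum_eq_zero
    intro t₂ ht₂
    obtain ⟨ht₁r, ht₁c⟩ := Finset.mem_filter.mp ht₁
    obtain ⟨ht₂r, ht₂c⟩ := Finset.mem_filter.mp ht₂
    rw [if_neg, mul_zero]
    intro hdvd
    set v₁ : ℕ := ((t₁ : ZMod b₁)⁻¹).val with hv₁
    set v₂ : ℕ := ((t₂ : ZMod b₂)⁻¹).val with hv₂
    have hc₁ : Nat.Coprime v₁ b₁ := coprime_inv_val ht₁c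
    have hc₂ : Nat.Coprime v₂ b₂ := coprime_inv_val ht₂c
    have ha : b₁ ∣ v₂ * b₁ + v₁ * b₂ := by
      rw [Nat.add_comm]
      exact dvd_trans (Dvd.intro b₂ rfl) hdvd
    have ha' : b₁ ∣ v₁ * b₂ := (Nat.dvd_add_right (dvd_mul_left b₁ v₂)).mp ha
    have hd12 : b₁ ∣ b₂ := Nat.Coprime.dvd_of_dvd_mul_left hc₁.symm ha'
    have hb : b₂ ∣ v₁ * b₂ + v₂ * b₁ := dvd_trans (dvd_mul_left b₂ b₁) hdvd
    have hb' : b₂ ∣ v₂ * b₁ := (Nat.dvd_add_right (dvd_mul_left b₂ v₁)).mp hb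
    have hd21 : b₂ ∣ b₁ := Nat.Coprime.dvd_of_dvd_mul_left hc₂.symm hb'
    exact h (Nat.dvd_antisymm hd12 hd21)
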